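/- Let G be a countable group and let S be the subspace { 0 } ∪ { 1/n : n ∈ ℕ, n ≥ 1 } of ℝ with base point 0. Then G admits a group homomorphism with nontrivial image into Homeo₊(ℝ) if and only if G admits a group homomorphism with nontrivial image into the group Homeo̰₊^{(S,0)}(ℝ, 0). -/

import Mathlib

open Filter Topology Set

def HomeoPlusReal : Subgroup (Equiv.Perm ℝ) where
  carrier := {f | Continuous f ∧ Continuous f.symm ∧ StrictMono f}
  one_mem' := by
    refine ⟨continuous_id, ?_, fun a b h => h⟩
    exact continuous_id
  mul_mem' := by
    rintro a b ⟨ha1, ha2, ha3⟩ ⟨hb1, hb2, hb3⟩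
    refine ⟨?_, ?_, ?_⟩
    · simpa [Equiv.Perm.coe_mul] using ha1.comp hb1
    · have : Continuous (⇑b.symm ∘ ⇑a.symm) := hb2.comp ha2
      simpa [Equiv.Perm.mul_def, Equiv.symm_trans_apply, Function.comp] using this
    · intro x y h
      simpa [Equiv.Perm.coe_mul] using ha3 (hb3 h)
  inv_mem' := by
    rintro a ⟨ha1, ha2, ha3⟩
    refine ⟨by simpa [Equiv.Perm.inv_def] using ha2, by simpa [Equiv.Perm.inv_def] using ha1, ?_⟩
    intro x y h
    have h2 := ha3.lt_iff_lt (a := a.symm x) (b := a.symm y)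
    simp only [Equiv.apply_symm_apply] at h2
    simpa using h2.mp h

variable (S : Type*) [TopologicalSpace S] (s₀ : S)

/-- Data representing a local homeomorphism `F` of an open neighborhood of
`(0, s₀)` in `ℝ × S` of the form `F (x, s) = (h_s x, s)`, where each `h_s` is a
local orientation-preserving (strictly increasing) homeomorphism of `ℝ`, with
`F (0, s₀) = (0, s₀)`, together with a local inverse `G`. -/
structure ParamLocalHomeo where
  F : ℝ × S → ℝ × S
  G : ℝ × S → ℝ × S
  U : Set (ℝ × S)
  V : Set (ℝ × S)
  isOpen_U : IsOpen U
  isOpen_V : IsOpen V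
  mem_U : ((0 : ℝ), s₀) ∈ U
  mem_V : ((0 : ℝ), s₀) ∈ V
  contF : ContinuousOn F U
  contG : ContinuousOn G V
  mapsF : Set.MapsTo F U V
  mapsG : Set.MapsTo G V U
  leftInv : ∀ p ∈ U, G (F p) = p
  rightInv : ∀ p ∈ V, F (G p) = p
  snd_eq : ∀ p ∈ U, (F p).2 = p.2
  mono : ∀ p ∈ U, ∀ q ∈ U, p.2 = q.2 → p.1 < q.1 → (F p).1 < (F q).1
  fixes : F ((0 : ℝ), s₀) = ((0 : ℝ), s₀)

namespace ParamLocalHomeo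

variable {S s₀}

instance setoid : Setoid (ParamLocalHomeo S s₀) where
  r d e := d.F =ᶠ[nhds ((0 : ℝ), s₀)] e.F
  iseqv := ⟨fun _ => Filter.EventuallyEq.refl _ _,
    fun h => h.symm, fun h h' => h.trans h'⟩

lemma G_fixes (d : ParamLocalHomeo S s₀) : d.G ((0 : ℝ), s₀) = ((0 : ℝ), s₀) := by
  have h := d.leftInv _ d.mem_U
  rw [d.fixes] at h
  exact h

lemma G_snd_eq (d : ParamLocalHomeo S s₀) : ∀ p ∈ d.V, (d.G p).2 = p.2 := by
  intro p hp
  have h := d.snd_eq (d.G p) (d.mapsG hp)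
  rw [d.rightInv p hp] at h
  exact h.symm

def one : ParamLocalHomeo S s₀ where
  F := id
  G := id
  U := Set.univ
  V := Set.univ
  isOpen_U := isOpen_univ
  isOpen_V := isOpen_univ
  mem_U := trivial
  mem_V := trivial
  contF := continuousOn_id
  contG := continuousOn_id
  mapsF := fun _ _ => trivial
  mapsG := fun _ _ => trivial
  leftInv := fun _ _ => rfl
  rightInv := fun _ _ => rfl
  snd_eq := fun _ _ => rfl
  mono := fun _ _ _ _ _ h => h
  fixes := rfl

def comp (d e : ParamLocalHomeo S s₀) : ParamLocalHomeo S s₀ where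
  F := d.F ∘ e.F
  G := e.G ∘ d.G
  U := e.U ∩ e.F ⁻¹' d.U
  V := d.V ∩ d.G ⁻¹' e.V
  isOpen_U := e.contF.isOpen_inter_preimage e.isOpen_U d.isOpen_U
  isOpen_V := d.contG.isOpen_inter_preimage d.isOpen_V e.isOpen_V
  mem_U := ⟨e.mem_U, by simp only [Set.mem_preimage, e.fixes]; exact d.mem_U⟩
  mem_V := ⟨d.mem_V, by simp only [Set.mem_preimage, d.G_fixes]; exact e.mem_V⟩
  contF := d.contF.comp (e.contF.mono Set.inter_subset_left) (fun x hx => hx.2)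
  contG := e.contG.comp (d.contG.mono Set.inter_subset_left) (fun x hx => hx.2)
  mapsF := by
    rintro p ⟨hp1, hp2⟩
    refine ⟨d.mapsF hp2, ?_⟩
    simp only [Set.mem_preimage, Function.comp_apply]
    rw [d.leftInv _ hp2]
    exact e.mapsF hp1
  mapsG := by
    rintro q ⟨hq1, hq2⟩
    refine ⟨e.mapsG hq2, ?_⟩
    simp only [Set.mem_preimage, Function.comp_apply]
    rw [e.rightInv _ hq2]
    exact d.mapsG hq1
  leftInv := by
    rintro p ⟨hp1, hp2⟩
    simp only [Function.comp_apply]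
    rw [d.leftInv _ hp2, e.leftInv _ hp1]
  rightInv := by
    rintro q ⟨hq1, hq2⟩
    simp only [Function.comp_apply]
    rw [e.rightInv _ hq2, d.rightInv _ hq1]
  snd_eq := by
    rintro p ⟨hp1, hp2⟩
    simp only [Function.comp_apply]
    rw [d.snd_eq _ hp2, e.snd_eq _ hp1]
  mono := by
    rintro p ⟨hp1, hp2⟩ q ⟨hq1, hq2⟩ hpq hlt
    refine d.mono _ hp2 _ hq2 ?_ (e.mono _ hp1 _ hq1 hpq hlt)
    rw [e.snd_eq _ hp1, e.snd_eq _ hq1, hpq]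
  fixes := by simp only [Function.comp_apply, e.fixes, d.fixes]

def inv (d : ParamLocalHomeo S s₀) : ParamLocalHomeo S s₀ where
  F := d.G
  G := d.F
  U := d.V
  V := d.U
  isOpen_U := d.isOpen_V
  isOpen_V := d.isOpen_U
  mem_U := d.mem_V
  mem_V := d.mem_U
  contF := d.contG
  contG := d.contF
  mapsF := d.mapsG
  mapsG := d.mapsF
  leftInv := d.rightInv
  rightInv := d.leftInv
  snd_eq := d.G_snd_eq
  mono := by
    intro p hp q hq hpq hlt
    have hGp := d.mapsG hp
    have hGq := d.mapsG hq
    have hsnd : (d.G p).2 = (d.G q).2 := by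
      rw [d.G_snd_eq p hp, d.G_snd_eq q hq, hpq]
    rcases lt_trichotomy (d.G p).1 (d.G q).1 with h | h | h
    · exact h
    · exfalso
      have : d.G p = d.G q := Prod.ext h hsnd
      have : p = q := by rw [← d.rightInv p hp, ← d.rightInv q hq, this]
      exact absurd (congrArg Prod.fst this) (ne_of_lt hlt)
    · exfalso
      have := d.mono _ hGq _ hGp hsnd.symm h
      rw [d.rightInv p hp, d.rightInv q hq] at this
      exact absurd hlt (not_lt.mpr this.le)
  fixes := d.G_fixes

lemma comp_sound {d₁ e₁ d₂ e₂ : ParamLocalHomeo S s₀} (h₁ : d₁ ≈ e₁) (h₂ : d₂ ≈ e₂) :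
    comp d₁ d₂ ≈ comp e₁ e₂ := by
  have hc : ContinuousAt d₂.F ((0 : ℝ), s₀) :=
    d₂.contF.continuousAt (d₂.isOpen_U.mem_nhds d₂.mem_U)
  have ht : Tendsto d₂.F (nhds ((0 : ℝ), s₀)) (nhds ((0 : ℝ), s₀)) := by
    have := hc.tendsto
    rwa [d₂.fixes] at this
  exact (h₁.comp_tendsto ht).trans (h₂.fun_comp e₁.F)

lemma inv_sound {d e : ParamLocalHomeo S s₀} (h : d ≈ e) : inv d ≈ inv e := by
  obtain ⟨s, hs, hseq⟩ := Filter.eventuallyEq_iff_exists_mem.mp h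
  obtain ⟨W, hWs, hWopen, hW0⟩ := mem_nhds_iff.mp hs
  set A : Set (ℝ × S) := d.U ∩ e.U ∩ W with hA
  have hAopen : IsOpen A := (d.isOpen_U.inter e.isOpen_U).inter hWopen
  have hA0 : ((0 : ℝ), s₀) ∈ A := ⟨⟨d.mem_U, e.mem_U⟩, hW0⟩
  have hBopen : IsOpen (d.V ∩ d.G ⁻¹' A) := d.contG.isOpen_inter_preimage d.isOpen_V hAopen
  have hB0 : ((0 : ℝ), s₀) ∈ d.V ∩ d.G ⁻¹' A :=
    ⟨d.mem_V, by simp only [Set.mem_preimage, d.G_fixes]; exact hA0⟩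
  apply Filter.eventuallyEq_of_mem (hBopen.mem_nhds hB0)
  rintro q ⟨hq1, hq2⟩
  simp only [Set.mem_preimage] at hq2
  obtain ⟨⟨hxU, hxU'⟩, hxW⟩ := hq2
  show d.G q = e.G q
  have h1 : d.F (d.G q) = q := d.rightInv q hq1
  have h2 : e.F (d.G q) = q := by rw [← hseq (hWs hxW)]; exact h1
  calc d.G q = e.G (e.F (d.G q)) := (e.leftInv _ hxU').symm
    _ = e.G q := by rw [h2]

end ParamLocalHomeo

/-- The group `Homeo̰₊^{(S,s₀)}(ℝ, 0)` of germs at `(0, s₀)` of local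
homeomorphisms of `ℝ × S` of the form `(x, s) ↦ (h_s x, s)`, fixing `(0, s₀)`,
under composition of germs. -/
def ParamGermHomeoPlus : Type _ := Quotient (ParamLocalHomeo.setoid (S := S) (s₀ := s₀))

namespace ParamGermHomeoPlus

instance : Group (ParamGermHomeoPlus S s₀) where
  mul := Quotient.map₂ ParamLocalHomeo.comp
    (fun _ _ h₁ _ _ h₂ => ParamLocalHomeo.comp_sound h₁ h₂)
  one := ⟦ParamLocalHomeo.one⟧
  inv := Quotient.map ParamLocalHomeo.inv (fun _ _ h => ParamLocalHomeo.inv_sound h)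
  mul_assoc a b c := by
    induction a using Quotient.ind
    induction b using Quotient.ind
    induction c using Quotient.ind
    exact Quotient.sound (Filter.EventuallyEq.refl _ _)
  one_mul a := by
    induction a using Quotient.ind
    exact Quotient.sound (Filter.EventuallyEq.refl _ _)
  mul_one a := by
    induction a using Quotient.ind
    exact Quotient.sound (Filter.EventuallyEq.refl _ _)
  inv_mul_cancel a := by
    induction a using Quotient.ind
    rename_i d
    apply Quotient.sound
    apply Filter.eventuallyEq_of_mem (d.isOpen_U.mem_nhds d.mem_U)
    intro p hp
    exact d.leftInv p hp

end ParamGermHomeoPlus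

/-- The subspace `{0} ∪ {1/n : n ∈ ℕ, n ≥ 1}` of `ℝ`. -/
def SeqSpace : Type := {x : ℝ // x = 0 ∨ ∃ n : ℕ, 1 ≤ n ∧ x = 1 / n}

instance : TopologicalSpace SeqSpace :=
  instTopologicalSpaceSubtype

/-- The base point `0` of `SeqSpace`. -/
def SeqSpace.zero : SeqSpace := ⟨0, Or.inl rfl⟩


section Stack

lemma my_logb_zpow (k : ℤ) : Real.logb 2 ((2:ℝ)^k) = k := by
  rw [Real.logb, Real.log_zpow]; field_simp

lemma zpow_floor_le (x:ℝ) (hx : 0 < x) : (2:ℝ) ^ (⌊Real.logb 2 x⌋) ≤ x := by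
  have h1 : (2:ℝ) ^ (⌊Real.logb 2 x⌋ : ℝ) ≤ (2:ℝ) ^ (Real.logb 2 x) :=
    Real.rpow_le_rpow_of_exponent_le one_le_two (Int.floor_le _)
  rw [Real.rpow_logb (by norm_num) (by norm_num) hx] at h1
  rwa [← Real.rpow_intCast]

lemma lt_zpow_floor_succ (x:ℝ) (hx: 0<x) : x < (2:ℝ) ^ (⌊Real.logb 2 x⌋ + 1) := by
  have h1 : (2:ℝ) ^ (Real.logb 2 x) < (2:ℝ) ^ ((⌊Real.logb 2 x⌋ + 1 : ℤ) : ℝ) := by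
    apply Real.rpow_lt_rpow_of_exponent_lt one_lt_two
    push_cast
    exact Int.lt_floor_add_one _
  rw [Real.rpow_logb (by norm_num) (by norm_num) hx] at h1
  rwa [← Real.rpow_intCast]

lemma floor_logb_eq (y:ℝ) (k:ℤ) (h1 : (2:ℝ)^k ≤ y) (h2 : y < 2^(k+1)) : ⌊Real.logb 2 y⌋ = k := by
  have hy : 0 < y := lt_of_lt_of_le (by positivity) h1
  rw [Int.floor_eq_iff]
  constructor
  · rw [show (k:ℝ) = Real.logb 2 ((2:ℝ)^k) by rw [my_logb_zpow]]
    exact Real.logb_le_logb_of_le one_lt_two (by positivity) h1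
  · rw [show ((k:ℝ)+1) = Real.logb 2 ((2:ℝ)^(k+1)) by rw [my_logb_zpow]; push_cast; ring]
    exact Real.logb_lt_logb one_lt_two hy h2

/-- `f` conjugated into the interval `(-1, 1)`, extended by the identity. -/
noncomputable def blk (f : ℝ → ℝ) (t : ℝ) : ℝ :=
  if ht : t ∈ Ioo (-1:ℝ) 1 then
    ((orderIsoIooNegOneOne ℝ) (f (((orderIsoIooNegOneOne ℝ).symm ⟨t, ht⟩ : ℝ))) : ℝ)
  else t

lemma blk_mem {f : ℝ → ℝ} {t : ℝ} (ht : t ∈ Ioo (-1:ℝ) 1) : blk f t ∈ Ioo (-1:ℝ) 1 := by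
  rw [blk, dif_pos ht]
  exact ((orderIsoIooNegOneOne ℝ) _).2

lemma blk_comp (f g : ℝ → ℝ) (t : ℝ) : blk (f ∘ g) t = blk f (blk g t) := by
  by_cases ht : t ∈ Ioo (-1:ℝ) 1
  · have hg : blk g t ∈ Ioo (-1:ℝ) 1 := blk_mem ht
    rw [blk, dif_pos ht]
    conv_rhs => rw [blk]
    rw [dif_pos hg]
    have : (⟨blk g t, hg⟩ : Ioo (-1:ℝ) 1)
        = (orderIsoIooNegOneOne ℝ) (g (((orderIsoIooNegOneOne ℝ).symm ⟨t, ht⟩ : ℝ))) := by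
      apply Subtype.ext
      simp only [blk, dif_pos ht]
    rw [this, OrderIso.symm_apply_apply]
    rfl
  · have hgt : blk g t = t := dif_neg ht
    rw [blk, dif_neg ht]
    conv_rhs => rw [blk]
    rw [hgt, dif_neg ht]

lemma blk_id : blk id = id := by
  funext t
  rw [blk]
  split_ifs with ht
  · simp
  · rfl

lemma blk_strictMonoOn {f : ℝ → ℝ} (hf : StrictMono f) {s t : ℝ}
    (hs : s ∈ Ioo (-1:ℝ) 1) (ht : t ∈ Ioo (-1:ℝ) 1) (hst : s < t) : blk f s < blk f t := by
  rw [blk, dif_pos hs, blk, dif_pos ht]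
  exact Subtype.coe_lt_coe.mpr ((orderIsoIooNegOneOne ℝ).strictMono
    (hf ((orderIsoIooNegOneOne ℝ).symm.strictMono (Subtype.mk_lt_mk.mpr hst))))

end Stack

section Stack2
/-- Countably many conjugated copies of `f`, one in each dyadic block
`(2^k, 2^(k+1))`, and the identity elsewhere. -/
noncomputable def stack (f : ℝ → ℝ) (x : ℝ) : ℝ :=
  if 0 < x ∧ (2:ℝ) ^ (⌊Real.logb 2 x⌋) < x then
    (2:ℝ) ^ (⌊Real.logb 2 x⌋) * ((blk f (2 * (x / 2 ^ (⌊Real.logb 2 x⌋)) - 3) + 3) / 2)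
  else x

lemma stack_coord_mem {x : ℝ} (h : 0 < x ∧ (2:ℝ) ^ (⌊Real.logb 2 x⌋) < x) :
    2 * (x / 2 ^ (⌊Real.logb 2 x⌋)) - 3 ∈ Ioo (-1:ℝ) 1 := by
  obtain ⟨hx, hlt⟩ := h
  have hp : (0:ℝ) < 2 ^ (⌊Real.logb 2 x⌋) := by positivity
  have h2 := lt_zpow_floor_succ x hx
  rw [zpow_add_one₀ (by norm_num : (2:ℝ) ≠ 0)] at h2
  constructor
  · have : 1 < x / 2 ^ (⌊Real.logb 2 x⌋) := (one_lt_div hp).mpr hlt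
    linarith
  · have : x / 2 ^ (⌊Real.logb 2 x⌋) < 2 := (div_lt_iff₀ hp).mpr (by linarith)
    linarith

lemma stack_mem_block {f : ℝ → ℝ} {x : ℝ} (h : 0 < x ∧ (2:ℝ) ^ (⌊Real.logb 2 x⌋) < x) :
    stack f x ∈ Ioo ((2:ℝ) ^ (⌊Real.logb 2 x⌋)) ((2:ℝ) ^ (⌊Real.logb 2 x⌋ + 1)) := by
  rw [stack, if_pos h]
  have hp : (0:ℝ) < 2 ^ (⌊Real.logb 2 x⌋) := by positivity
  have hv := blk_mem (f := f) (stack_coord_mem h)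
  simp only [mem_Ioo] at hv ⊢
  rw [zpow_add_one₀ (by norm_num : (2:ℝ) ≠ 0)]
  constructor
  · nlinarith [hv.1]
  · nlinarith [hv.2]

lemma stack_not_block {f : ℝ → ℝ} {x : ℝ} (h : ¬(0 < x ∧ (2:ℝ) ^ (⌊Real.logb 2 x⌋) < x)) :
    stack f x = x := if_neg h

lemma stack_id : stack id = id := by
  funext x
  rw [stack]
  split_ifs with h
  · rw [blk_id]; simp only [id_eq]
    have hp : (0:ℝ) < 2 ^ (⌊Real.logb 2 x⌋) := by positivity
    field_simp
    ring
  · rfl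

lemma stack_comp (f g : ℝ → ℝ) (x : ℝ) : stack (f ∘ g) x = stack f (stack g x) := by
  by_cases h : 0 < x ∧ (2:ℝ) ^ (⌊Real.logb 2 x⌋) < x
  · set k := ⌊Real.logb 2 x⌋ with hk
    have hy := stack_mem_block (f := g) h
    have hy' : 0 < stack g x := lt_trans (by positivity) hy.1
    have hfl : ⌊Real.logb 2 (stack g x)⌋ = k := floor_logb_eq _ _ hy.1.le hy.2
    have hcond : 0 < stack g x ∧ (2:ℝ) ^ (⌊Real.logb 2 (stack g x)⌋) < stack g x := by
      refine ⟨hy', ?_⟩; rw [hfl]; exact hy.1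
    conv_rhs => rw [stack]
    rw [if_pos hcond, hfl]
    conv_lhs => rw [stack]
    rw [if_pos h]
    have hp : (0:ℝ) < 2 ^ k := by positivity
    have hyval : stack g x = (2:ℝ) ^ k * ((blk g (2 * (x / 2 ^ k) - 3) + 3) / 2) := by
      rw [stack, if_pos h]
    have hcoord : 2 * (stack g x / 2 ^ k) - 3 = blk g (2 * (x / 2 ^ k) - 3) := by
      rw [hyval]; field_simp; ring
    rw [hcoord, ← blk_comp]
  · have hgx : stack g x = x := stack_not_block h
    rw [stack_not_block (f := f ∘ g) h, hgx, stack_not_block (f := f) h]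

lemma stack_strictMono {f : ℝ → ℝ} (hf : StrictMono f) : StrictMono (stack f) := by
  intro x y hxy
  by_cases hx : 0 < x ∧ (2:ℝ) ^ (⌊Real.logb 2 x⌋) < x
  · have hbx := stack_mem_block (f := f) hx
    by_cases hy : 0 < y ∧ (2:ℝ) ^ (⌊Real.logb 2 y⌋) < y
    · have hby := stack_mem_block (f := f) hy
      rcases lt_trichotomy (⌊Real.logb 2 x⌋) (⌊Real.logb 2 y⌋) with hk | hk | hk
      · have : (2:ℝ) ^ (⌊Real.logb 2 x⌋ + 1) ≤ 2 ^ (⌊Real.logb 2 y⌋) :=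
          zpow_le_zpow_right₀ one_le_two (by omega)
        exact lt_of_lt_of_le hbx.2 (le_trans this hby.1.le)
      · -- same block
        rw [stack, if_pos hx]
        conv_rhs => rw [stack]
        rw [if_pos hy, ← hk]
        have hp : (0:ℝ) < 2 ^ (⌊Real.logb 2 x⌋) := by positivity
        have hlt : blk f (2 * (x / 2 ^ (⌊Real.logb 2 x⌋)) - 3)
            < blk f (2 * (y / 2 ^ (⌊Real.logb 2 x⌋)) - 3) := by
          apply blk_strictMonoOn hf (stack_coord_mem hx) (hk ▸ stack_coord_mem hy)
          have : x / 2 ^ (⌊Real.logb 2 x⌋) < y / 2 ^ (⌊Real.logb 2 x⌋) := by gcongr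
          linarith
        gcongr
      · exfalso
        have h1 : (2:ℝ) ^ (⌊Real.logb 2 y⌋ + 1) ≤ 2 ^ (⌊Real.logb 2 x⌋) :=
          zpow_le_zpow_right₀ one_le_two (by omega)
        have h2 := lt_zpow_floor_succ y hy.1
        linarith [hx.2]
    · rw [stack_not_block hy]
      have hy0 : 0 < y := lt_trans hx.1 hxy
      have hyle : y ≤ (2:ℝ) ^ (⌊Real.logb 2 y⌋) := by
        rcases not_and_or.mp hy with h | h
        · exact absurd hy0 h
        · exact not_lt.mp h
      have h2 : (2:ℝ) ^ (⌊Real.logb 2 x⌋ + 1) ≤ y := by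
        by_contra hcon
        push_neg at hcon
        have hkeq : ⌊Real.logb 2 y⌋ = ⌊Real.logb 2 x⌋ :=
          floor_logb_eq y _ (le_trans (zpow_floor_le x hx.1) hxy.le) hcon
        rw [hkeq] at hyle
        linarith [hx.2]
      exact lt_of_lt_of_le hbx.2 h2
  · rw [stack_not_block hx]
    by_cases hy : 0 < y ∧ (2:ℝ) ^ (⌊Real.logb 2 y⌋) < y
    · have hby := stack_mem_block (f := f) hy
      have hxle : x ≤ (2:ℝ) ^ (⌊Real.logb 2 y⌋) := by
        rcases le_or_gt x 0 with h0 | h0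
        · exact le_trans h0 (by positivity)
        · have hxle2 : x ≤ (2:ℝ) ^ (⌊Real.logb 2 x⌋) := by
            rcases not_and_or.mp hx with h | h
            · exact absurd h0 h
            · exact not_lt.mp h
          by_contra hcon
          push_neg at hcon
          have hkeq : ⌊Real.logb 2 x⌋ = ⌊Real.logb 2 y⌋ :=
            floor_logb_eq x _ hcon.le (lt_trans hxy (lt_zpow_floor_succ y hy.1))
          rw [hkeq] at hxle2
          linarith
      exact lt_of_le_of_lt hxle hby.1
    · rw [stack_not_block hy]; exact hxy

lemma stack_zero (f : ℝ → ℝ) : stack f 0 = 0 :=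
  stack_not_block (by simp)

end Stack2

section Stack3

lemma strictMono_surjective_continuous {g : ℝ → ℝ} (h1 : StrictMono g)
    (h2 : Function.Surjective g) : Continuous g := by
  have h := (StrictMono.orderIsoOfSurjective g h1 h2).toHomeomorph.continuous
  rwa [show ⇑(StrictMono.orderIsoOfSurjective g h1 h2).toHomeomorph = g from
    funext fun x => congrFun (StrictMono.coe_orderIsoOfSurjective g h1 h2) x] at h

lemma stack_leftInverse (f : Equiv.Perm ℝ) :
    ∀ x, stack ⇑f.symm (stack ⇑f x) = x := by
  intro x
  rw [← stack_comp]
  have : (⇑f.symm ∘ ⇑f) = id := funext fun y => f.symm_apply_apply y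
  rw [this, stack_id, id_eq]

lemma stack_surjective (f : Equiv.Perm ℝ) : Function.Surjective (stack ⇑f) :=
  fun y => ⟨stack ⇑f.symm y, by
    have := stack_leftInverse f.symm
    simpa using this y⟩

lemma stack_exists_ne {f : ℝ → ℝ} {a : ℝ} (ha : f a ≠ a) {ε : ℝ} (hε : 0 < ε) :
    ∃ x : ℝ, 0 < x ∧ x < ε ∧ stack f x ≠ x := by
  set σa : ℝ := ((orderIsoIooNegOneOne ℝ) a : ℝ) with hσa
  have hmem : σa ∈ Ioo (-1:ℝ) 1 := ((orderIsoIooNegOneOne ℝ) a).2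
  set k : ℤ := ⌊Real.logb 2 (ε/2)⌋ - 1 with hkdef
  have hp : (0:ℝ) < 2 ^ k := by positivity
  have hk : (2:ℝ) ^ (k+1) ≤ ε / 2 := by
    rw [hkdef, sub_add_cancel]
    exact zpow_floor_le _ (by linarith)
  set x : ℝ := 2 ^ k * ((σa + 3) / 2) with hxdef
  have hx1 : (2:ℝ)^k < x := by
    rw [hxdef]
    nlinarith [hmem.1]
  have hx2 : x < (2:ℝ)^(k+1) := by
    rw [hxdef, zpow_add_one₀ (by norm_num : (2:ℝ) ≠ 0)]
    nlinarith [hmem.2]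
  have hx0 : 0 < x := lt_trans hp hx1
  have hfl : ⌊Real.logb 2 x⌋ = k := floor_logb_eq x k hx1.le hx2
  have hcond : 0 < x ∧ (2:ℝ) ^ (⌊Real.logb 2 x⌋) < x := ⟨hx0, by rw [hfl]; exact hx1⟩
  refine ⟨x, hx0, ?_, ?_⟩
  · linarith
  · rw [stack, if_pos hcond, hfl]
    have hcoord : 2 * (x / 2 ^ k) - 3 = σa := by
      rw [hxdef]; field_simp; ring
    rw [hcoord]
    have hblk : blk f σa = ((orderIsoIooNegOneOne ℝ) (f a) : ℝ) := by
      rw [blk, dif_pos hmem]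
      congr 2
      rw [show (⟨σa, hmem⟩ : Ioo (-1:ℝ) 1) = (orderIsoIooNegOneOne ℝ) a from Subtype.ext rfl,
        OrderIso.symm_apply_apply]
    rw [hblk]
    intro hcon
    rw [hxdef] at hcon
    have h5 : ((orderIsoIooNegOneOne ℝ) (f a) : ℝ) = σa := by
      have hne : (2:ℝ)^k ≠ 0 := ne_of_gt hp
      field_simp at hcon
      linarith
    exact ha ((orderIsoIooNegOneOne ℝ).injective (Subtype.ext h5))

end Stack3

section Forward

lemma strictMono_perm_symm {e : Equiv.Perm ℝ} (he : StrictMono ⇑e) : StrictMono ⇑e.symm := by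
  intro x y h
  rcases lt_trichotomy (e.symm x) (e.symm y) with hh | hh | hh
  · exact hh
  · exfalso
    have := congrArg e hh
    simp only [Equiv.apply_symm_apply] at this
    exact absurd this (ne_of_lt h)
  · exfalso
    have := he hh
    simp only [Equiv.apply_symm_apply] at this
    linarith

lemma HomeoPlusRealStrictMono (f : HomeoPlusReal) : StrictMono ⇑(f : Equiv.Perm ℝ) :=
  f.2.2.2

/-- The parametrized local homeo induced by stacking a homeo of `ℝ` near `0`. -/
noncomputable def fwdD (S : Type*) [TopologicalSpace S] (s₀ : S) (f : HomeoPlusReal) :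
    ParamLocalHomeo S s₀ where
  F := fun p => (stack ⇑(f : Equiv.Perm ℝ) p.1, p.2)
  G := fun p => (stack ⇑(f : Equiv.Perm ℝ).symm p.1, p.2)
  U := Set.univ
  V := Set.univ
  isOpen_U := isOpen_univ
  isOpen_V := isOpen_univ
  mem_U := Set.mem_univ _
  mem_V := Set.mem_univ _
  contF := by
    apply Continuous.continuousOn
    exact ((strictMono_surjective_continuous (stack_strictMono (HomeoPlusRealStrictMono f))
      (stack_surjective _)).comp continuous_fst).prodMk continuous_snd
  contG := by
    apply Continuous.continuousOn
    exact ((strictMono_surjective_continuous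
      (stack_strictMono (strictMono_perm_symm (HomeoPlusRealStrictMono f)))
      (stack_surjective ((f : Equiv.Perm ℝ)⁻¹))).comp continuous_fst).prodMk continuous_snd
  mapsF := fun _ _ => Set.mem_univ _
  mapsG := fun _ _ => Set.mem_univ _
  leftInv := fun p _ => Prod.ext (stack_leftInverse _ p.1) rfl
  rightInv := fun p _ => by
    have h := stack_leftInverse ((f : Equiv.Perm ℝ)).symm p.1
    rw [Equiv.symm_symm] at h
    exact Prod.ext h rfl
  snd_eq := fun _ _ => rfl
  mono := fun p _ q _ _ hlt => stack_strictMono (HomeoPlusRealStrictMono f) hlt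
  fixes := Prod.ext (stack_zero _) rfl

lemma fwdD_F (S : Type*) [TopologicalSpace S] (s₀ : S) (f : HomeoPlusReal) (p : ℝ × S) :
    (fwdD S s₀ f).F p = (stack ⇑(f : Equiv.Perm ℝ) p.1, p.2) := rfl

theorem forward_exists {G : Type*} [Group G] (S : Type*) [TopologicalSpace S] (s₀ : S)
    (ψ : G →* HomeoPlusReal) (g₀ : G) (hg : ψ g₀ ≠ 1) :
    ∃ φ : G →* ParamGermHomeoPlus S s₀, ∃ g : G, φ g ≠ 1 := by
  have hstack : ∀ a b : G, ∀ x : ℝ,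
      stack ⇑((ψ (a*b) : HomeoPlusReal) : Equiv.Perm ℝ) x
        = stack ⇑((ψ a : HomeoPlusReal) : Equiv.Perm ℝ)
            (stack ⇑((ψ b : HomeoPlusReal) : Equiv.Perm ℝ) x) := by
    intro a b x
    rw [← stack_comp]
    congr 1
    rw [map_mul]
    rfl
  refine ⟨MonoidHom.mk' (fun g => (⟦fwdD S s₀ (ψ g)⟧ : ParamGermHomeoPlus S s₀)) ?_, g₀, ?_⟩
  · intro a b
    show (⟦fwdD S s₀ (ψ (a*b))⟧ : ParamGermHomeoPlus S s₀)
      = ⟦(fwdD S s₀ (ψ a)).comp (fwdD S s₀ (ψ b))⟧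
    apply Quotient.sound
    apply Filter.Eventually.of_forall
    intro p
    show (fwdD S s₀ (ψ (a*b))).F p = (fwdD S s₀ (ψ a)).F ((fwdD S s₀ (ψ b)).F p)
    rw [fwdD_F, fwdD_F, fwdD_F, hstack a b p.1]
  · intro hcon
    -- extract a moved point of ψ g₀
    obtain ⟨a, ha⟩ : ∃ a : ℝ, ((ψ g₀ : HomeoPlusReal) : Equiv.Perm ℝ) a ≠ a := by
      by_contra hfix
      push_neg at hfix
      exact hg (Subtype.ext (Equiv.ext fun x => hfix x))
    have h : (fwdD S s₀ (ψ g₀)).F =ᶠ[nhds ((0:ℝ), s₀)] ParamLocalHomeo.one.F :=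
      Quotient.exact hcon
    obtain ⟨O, hOsub, hOopen, hOmem⟩ := mem_nhds_iff.mp h
    obtain ⟨u, v, hu, hv, h0u, hsv, huv⟩ := isOpen_prod_iff.mp hOopen 0 s₀ hOmem
    obtain ⟨ε, hε, hball⟩ := Metric.isOpen_iff.mp hu 0 h0u
    obtain ⟨x, hx0, hxε, hxne⟩ := stack_exists_ne ha hε
    have hxu : x ∈ u := hball (by
      simp only [Metric.mem_ball, Real.dist_eq, sub_zero]
      rw [abs_of_pos hx0]; exact hxε)
    have hmemO : ((x, s₀) : ℝ × S) ∈ O := huv ⟨hxu, hsv⟩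
    have := hOsub hmemO
    simp only [Set.mem_setOf_eq] at this
    exact hxne (congrArg Prod.fst this)

end Forward

section RatExt

/-- Extension of an order isomorphism of `ℚ` to `ℝ` by suprema. -/
noncomputable def ratExt (e : ℚ ≃o ℚ) (x : ℝ) : ℝ :=
  sSup {y : ℝ | ∃ q : ℚ, (q : ℝ) ≤ x ∧ y = (e q : ℝ)}

lemma ratExt_set_nonempty (e : ℚ ≃o ℚ) (x : ℝ) :
    {y : ℝ | ∃ q : ℚ, (q : ℝ) ≤ x ∧ y = (e q : ℝ)}.Nonempty := by
  obtain ⟨q, hq⟩ := exists_rat_lt x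
  exact ⟨(e q : ℝ), q, hq.le, rfl⟩

lemma ratExt_set_bddAbove (e : ℚ ≃o ℚ) (x : ℝ) :
    BddAbove {y : ℝ | ∃ q : ℚ, (q : ℝ) ≤ x ∧ y = (e q : ℝ)} := by
  obtain ⟨r, hr⟩ := exists_rat_gt x
  refine ⟨(e r : ℝ), ?_⟩
  rintro y ⟨q, hq, rfl⟩
  have : q < r := by exact_mod_cast lt_of_le_of_lt hq hr
  exact_mod_cast (e.strictMono this).le

lemma ratExt_rat (e : ℚ ≃o ℚ) (q₀ : ℚ) : ratExt e (q₀ : ℝ) = (e q₀ : ℝ) := by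
  apply IsGreatest.csSup_eq
  constructor
  · exact ⟨q₀, le_refl _, rfl⟩
  · rintro y ⟨q, hq, rfl⟩
    have : q ≤ q₀ := by exact_mod_cast hq
    exact_mod_cast e.monotone this

lemma ratExt_strictMono (e : ℚ ≃o ℚ) : StrictMono (ratExt e) := by
  intro x y hxy
  obtain ⟨q₁, hq1, hq1'⟩ := exists_rat_btwn hxy
  obtain ⟨q₂, hq2, hq2'⟩ := exists_rat_btwn hq1'
  have h1 : ratExt e x ≤ (e q₁ : ℝ) := by
    apply csSup_le (ratExt_set_nonempty e x)
    rintro z ⟨q, hq, rfl⟩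
    have : q ≤ q₁ := by exact_mod_cast le_of_lt (lt_of_le_of_lt hq hq1)
    exact_mod_cast e.monotone this
  have h2 : (e q₂ : ℝ) ≤ ratExt e y := le_csSup (ratExt_set_bddAbove e y) ⟨q₂, hq2'.le, rfl⟩
  have h3 : (e q₁ : ℝ) < (e q₂ : ℝ) := by
    exact_mod_cast e.strictMono (by exact_mod_cast hq2)
  linarith

lemma ratExt_rightInv (e : ℚ ≃o ℚ) (y : ℝ) : ratExt e (ratExt e.symm y) = y := by
  set x := ratExt e.symm y with hx
  apply le_antisymm
  · apply csSup_le (ratExt_set_nonempty e x)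
    rintro z ⟨q, hq, rfl⟩
    by_contra hcon
    push_neg at hcon
    obtain ⟨r, hr1, hr2⟩ := exists_rat_btwn hcon
    have hxle : x ≤ (e.symm r : ℝ) := by
      apply csSup_le (ratExt_set_nonempty e.symm y)
      rintro z ⟨r', hr', rfl⟩
      have : r' < r := by exact_mod_cast lt_of_le_of_lt hr' hr1
      exact_mod_cast (e.symm.strictMono this).le
    have h5 : e.symm r < q := by
      have : r < e q := by exact_mod_cast hr2
      have := e.symm.strictMono this
      simpa using this
    have : (q : ℝ) ≤ (e.symm r : ℝ) := le_trans hq hxle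
    have h6 : q ≤ e.symm r := by exact_mod_cast this
    exact absurd h6 (not_le.mpr h5)
  · by_contra hcon
    push_neg at hcon
    obtain ⟨r, hr1, hr2⟩ := exists_rat_btwn hcon
    have hmem : (e.symm r : ℝ) ≤ x :=
      le_csSup (ratExt_set_bddAbove e.symm y) ⟨r, hr2.le, rfl⟩
    have : (r : ℝ) ≤ ratExt e x := by
      have : ((e (e.symm r) : ℚ) : ℝ) ≤ ratExt e x :=
        le_csSup (ratExt_set_bddAbove e x) ⟨e.symm r, hmem, rfl⟩
      simpa using this
    linarith

lemma ratExt_surjective (e : ℚ ≃o ℚ) : Function.Surjective (ratExt e) :=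
  fun y => ⟨ratExt e.symm y, ratExt_rightInv e y⟩

lemma ratExt_continuous (e : ℚ ≃o ℚ) : Continuous (ratExt e) :=
  strictMono_surjective_continuous (ratExt_strictMono e) (ratExt_surjective e)

/-- The induced element of `Homeo₊(ℝ)`. -/
noncomputable def ratExtHomeo (e : ℚ ≃o ℚ) : HomeoPlusReal :=
  ⟨(StrictMono.orderIsoOfSurjective (ratExt e) (ratExt_strictMono e)
      (ratExt_surjective e)).toEquiv,
    by
      constructor
      · show Continuous (ratExt e)
        exact ratExt_continuous e
      constructor
      · have h := (StrictMono.orderIsoOfSurjective (ratExt e) (ratExt_strictMono e)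
          (ratExt_surjective e)).symm.toHomeomorph.continuous
        exact h
      · show StrictMono (ratExt e)
        exact ratExt_strictMono e⟩

lemma ratExtHomeo_apply (e : ℚ ≃o ℚ) (x : ℝ) :
    ((ratExtHomeo e : Equiv.Perm ℝ)) x = ratExt e x := rfl

lemma ratExtHomeo_mul (e₁ e₂ : ℚ ≃o ℚ) :
    ratExtHomeo (e₂.trans e₁) = ratExtHomeo e₁ * ratExtHomeo e₂ := by
  have hfun : ratExt (e₂.trans e₁) = ratExt e₁ ∘ ratExt e₂ := by
    apply Continuous.ext_on (Rat.isDenseEmbedding_coe_real.dense) (ratExt_continuous _)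
      ((ratExt_continuous e₁).comp (ratExt_continuous e₂))
    rintro _ ⟨q, rfl⟩
    simp only [Function.comp_apply, ratExt_rat]
    rfl
  apply Subtype.ext
  apply Equiv.ext
  intro x
  show ratExt (e₂.trans e₁) x = _
  rw [hfun]
  rfl

end RatExt

section LeftPreorder

/-- A left-invariant total preorder on a group. -/
structure LeftPreorder (G : Type*) [Group G] where
  rel : G → G → Prop
  refl : ∀ a, rel a a
  trans : ∀ {a b c}, rel a b → rel b c → rel a c
  total : ∀ a b, rel a b ∨ rel b a
  invl : ∀ (k : G) {a b}, rel a b → rel (k * a) (k * b)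

namespace LeftPreorder

variable {G : Type*} [Group G] (P : LeftPreorder G)

def toSetoid : Setoid G where
  r a b := P.rel a b ∧ P.rel b a
  iseqv := ⟨fun a => ⟨P.refl a, P.refl a⟩, fun h => ⟨h.2, h.1⟩,
    fun h h' => ⟨P.trans h.1 h'.1, P.trans h'.2 h.2⟩⟩

abbrev Q : Type _ := Quotient P.toSetoid

noncomputable instance : LinearOrder P.Q where
  le := Quotient.lift₂ P.rel (fun a₁ b₁ a₂ b₂ ha hb => propext
    ⟨fun h => P.trans (P.trans ha.2 h) hb.1, fun h => P.trans (P.trans ha.1 h) hb.2⟩)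
  le_refl := by
    rintro ⟨a⟩
    exact P.refl a
  le_trans := by
    rintro ⟨a⟩ ⟨b⟩ ⟨c⟩ h1 h2
    exact P.trans h1 h2
  le_antisymm := by
    rintro ⟨a⟩ ⟨b⟩ h1 h2
    exact Quotient.sound ⟨h1, h2⟩
  le_total := by
    rintro ⟨a⟩ ⟨b⟩
    exact P.total a b
  toDecidableLE := fun a b => Classical.dec _

lemma mk_le_mk {a b : G} : ((Quotient.mk P.toSetoid a : P.Q) ≤ (Quotient.mk P.toSetoid b : P.Q)) ↔ P.rel a b := Iff.rfl

instance [Countable G] : Countable P.Q := Quotient.countable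

/-- Left translation as an order isomorphism of the quotient. -/
def act (k : G) : P.Q ≃o P.Q where
  toFun := Quotient.map (fun a => k * a) (fun a b hab => ⟨P.invl k hab.1, P.invl k hab.2⟩)
  invFun := Quotient.map (fun a => k⁻¹ * a) (fun a b hab => ⟨P.invl k⁻¹ hab.1, P.invl k⁻¹ hab.2⟩)
  left_inv := by
    rintro ⟨a⟩
    show (⟦k⁻¹ * (k * a)⟧ : P.Q) = ⟦a⟧
    rw [inv_mul_cancel_left]
  right_inv := by
    rintro ⟨a⟩
    show (⟦k * (k⁻¹ * a)⟧ : P.Q) = ⟦a⟧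
    rw [mul_inv_cancel_left]
  map_rel_iff' := by
    rintro ⟨a⟩ ⟨b⟩
    show P.rel (k * a) (k * b) ↔ P.rel a b
    constructor
    · intro h
      have := P.invl k⁻¹ h
      simpa [inv_mul_cancel_left] using this
    · exact P.invl k

lemma act_mk (k a : G) : P.act k ⟦a⟧ = ⟦k * a⟧ := rfl

lemma act_mul (k k' : G) (x : P.Q) : P.act (k * k') x = P.act k (P.act k' x) := by
  induction x using Quotient.ind
  rename_i a
  show (⟦(k * k') * a⟧ : P.Q) = ⟦k * (k' * a)⟧
  rw [mul_assoc]

end LeftPreorder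

end LeftPreorder

section Realize

namespace LeftPreorder

variable {G : Type*} [Group G] (P : LeftPreorder G)

/-- Left translation acting on `P.Q ×ₗ ℚ`. -/
noncomputable def actLex (k : G) : (P.Q ×ₗ ℚ) ≃o (P.Q ×ₗ ℚ) where
  toFun x := toLex (P.act k (ofLex x).1, (ofLex x).2)
  invFun x := toLex ((P.act k).symm (ofLex x).1, (ofLex x).2)
  left_inv x := by simp
  right_inv x := by simp
  map_rel_iff' := by
    intro a b
    constructor
    · intro hab
      rcases Prod.Lex.le_iff.mp hab with h1 | ⟨h1, h2⟩
      · exact Prod.Lex.le_iff.mpr (Or.inl ((P.act k).lt_iff_lt.mp h1))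
      · exact Prod.Lex.le_iff.mpr (Or.inr ⟨(P.act k).toEquiv.injective h1, h2⟩)
    · intro hab
      rcases Prod.Lex.le_iff.mp hab with h1 | ⟨h1, h2⟩
      · exact Prod.Lex.le_iff.mpr (Or.inl ((P.act k).lt_iff_lt.mpr h1))
      · exact Prod.Lex.le_iff.mpr (Or.inr ⟨congrArg (P.act k) h1, h2⟩)

lemma actLex_apply (k : G) (x : P.Q ×ₗ ℚ) :
    P.actLex k x = toLex (P.act k (ofLex x).1, (ofLex x).2) := rfl

lemma actLex_mul (k k' : G) (x : P.Q ×ₗ ℚ) :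
    P.actLex (k * k') x = P.actLex k (P.actLex k' x) := by
  simp only [actLex_apply, ofLex_toLex]
  rw [act_mul]

theorem exists_hom [Countable G] (g₀ : G)
    (h : ¬ (P.rel g₀ 1 ∧ P.rel 1 g₀)) : ∃ ψ : G →* HomeoPlusReal, ∃ g : G, ψ g ≠ 1 := by
  haveI : Countable (P.Q ×ₗ ℚ) := Countable.of_equiv _ toLex
  haveI : DenselyOrdered (P.Q ×ₗ ℚ) := by
    constructor
    intro a b hab
    rcases Prod.Lex.lt_iff.mp hab with h1 | ⟨h1, h2⟩
    · exact ⟨toLex ((ofLex a).1, (ofLex a).2 + 1),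
        Prod.Lex.lt_iff.mpr (Or.inr ⟨rfl, by show (ofLex a).2 < (ofLex a).2 + 1; linarith⟩),
        Prod.Lex.lt_iff.mpr (Or.inl h1)⟩
    · obtain ⟨m, hm1, hm2⟩ := exists_between h2
      exact ⟨toLex ((ofLex a).1, m),
        Prod.Lex.lt_iff.mpr (Or.inr ⟨rfl, hm1⟩),
        Prod.Lex.lt_iff.mpr (Or.inr ⟨h1, hm2⟩)⟩
  haveI : NoMaxOrder (P.Q ×ₗ ℚ) := by
    constructor
    intro a
    exact ⟨toLex ((ofLex a).1, (ofLex a).2 + 1),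
      Prod.Lex.lt_iff.mpr (Or.inr ⟨rfl, by show (ofLex a).2 < (ofLex a).2 + 1; linarith⟩)⟩
  haveI : NoMinOrder (P.Q ×ₗ ℚ) := by
    constructor
    intro a
    exact ⟨toLex ((ofLex a).1, (ofLex a).2 - 1),
      Prod.Lex.lt_iff.mpr (Or.inr ⟨rfl, by show (ofLex a).2 - 1 < (ofLex a).2; linarith⟩)⟩
  haveI : Nonempty (P.Q ×ₗ ℚ) := ⟨toLex (Quotient.mk P.toSetoid 1, 0)⟩
  obtain ⟨e⟩ : Nonempty ((P.Q ×ₗ ℚ) ≃o ℚ) := Order.iso_of_countable_dense _ _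
  set ρ : G → ℚ ≃o ℚ := fun k => (e.symm.trans (P.actLex k)).trans e with hρ
  have hρmul : ∀ a b : G, ρ (a * b) = (ρ b).trans (ρ a) := by
    intro a b
    apply OrderIso.ext
    funext q
    simp only [hρ, OrderIso.trans_apply, OrderIso.symm_apply_apply]
    rw [actLex_mul]
  refine ⟨MonoidHom.mk' (fun k => ratExtHomeo (ρ k)) ?_, g₀, ?_⟩
  · intro a b
    show ratExtHomeo (ρ (a * b)) = ratExtHomeo (ρ a) * ratExtHomeo (ρ b)
    rw [hρmul a b, ratExtHomeo_mul]
  · intro hcon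
    set q : ℚ := e (toLex (Quotient.mk P.toSetoid 1, 0)) with hq
    have h1 : ratExt (ρ g₀) (q : ℝ) = (q : ℝ) := by
      have : ((ratExtHomeo (ρ g₀) : Equiv.Perm ℝ)) (q : ℝ) = (q : ℝ) := by
        rw [show (ratExtHomeo (ρ g₀) : Equiv.Perm ℝ) = (1 : Equiv.Perm ℝ) from
          congrArg _ hcon]
        rfl
      rwa [ratExtHomeo_apply] at this
    rw [ratExt_rat] at h1
    have h2 : ρ g₀ q = q := by exact_mod_cast h1
    have h3 : P.actLex g₀ (toLex (Quotient.mk P.toSetoid 1, 0))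
        = toLex (Quotient.mk P.toSetoid 1, 0) := by
      have := congrArg e.symm h2
      simpa only [hρ, hq, OrderIso.trans_apply, OrderIso.symm_apply_apply] using this
    rw [actLex_apply] at h3
    have h4 : P.act g₀ (Quotient.mk P.toSetoid 1) = Quotient.mk P.toSetoid 1 := by
      have := congrArg (fun z => (ofLex z).1) h3
      simpa using this
    rw [act_mk, mul_one] at h4
    exact h (Quotient.exact h4)

end LeftPreorder

end Realize

section Extract

open Filter

theorem exists_leftPreorder {G : Type*} [Group G] {S : Type*} [TopologicalSpace S]
    [FirstCountableTopology S] {s₀ : S}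
    (φ : G →* ParamGermHomeoPlus S s₀) (g₀ : G) (h : φ g₀ ≠ 1) :
    ∃ P : LeftPreorder G, ¬ (P.rel g₀ 1 ∧ P.rel 1 g₀) := by
  classical
  set D : G → ParamLocalHomeo S s₀ := fun g => (φ g).out with hD
  have hmk : ∀ g, (⟦D g⟧ : ParamGermHomeoPlus S s₀) = φ g := fun g => Quotient.out_eq _
  have hcomp : ∀ a b : G, (D (a*b)).F =ᶠ[nhds ((0:ℝ), s₀)] ((D a).F ∘ (D b).F) := by
    intro a b
    have h2 : (⟦D (a*b)⟧ : ParamGermHomeoPlus S s₀) = ⟦(D a).comp (D b)⟧ := by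
      rw [hmk, map_mul, ← hmk a, ← hmk b]
      rfl
    exact Quotient.exact h2
  have hone : (D 1).F =ᶠ[nhds ((0:ℝ), s₀)] (ParamLocalHomeo.one (S := S) (s₀ := s₀)).F := by
    have h2 : (⟦D 1⟧ : ParamGermHomeoPlus S s₀) = ⟦ParamLocalHomeo.one (S := S) (s₀ := s₀)⟧ := by
      rw [hmk, map_one]
      rfl
    exact Quotient.exact h2
  have hg₀ : ¬ ((D g₀).F =ᶠ[nhds ((0:ℝ), s₀)] (ParamLocalHomeo.one (S := S) (s₀ := s₀)).F) := by
    intro hcon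
    apply h
    have h2 : (⟦D g₀⟧ : ParamGermHomeoPlus S s₀) = ⟦ParamLocalHomeo.one (S := S) (s₀ := s₀)⟧ := Quotient.sound hcon
    rw [hmk] at h2
    exact h2
  obtain ⟨O, hOsub, hOopen, hOmem⟩ := mem_nhds_iff.mp hone
  obtain ⟨B, hB⟩ := (nhds ((0:ℝ), s₀)).exists_antitone_basis
  have hpt : ∀ m : ℕ, ∃ q : ℝ × S, q ∈ B m ∧ q ∈ O ∧ q ∈ (D g₀).U ∧ (D g₀).F q ≠ q := by
    intro m
    have hN : B m ∩ O ∩ (D g₀).U ∈ nhds ((0:ℝ), s₀) :=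
      inter_mem (inter_mem (hB.1.mem_of_mem trivial) (hOopen.mem_nhds hOmem))
        (((D g₀).isOpen_U).mem_nhds (D g₀).mem_U)
    by_contra hcon
    push_neg at hcon
    apply hg₀
    apply Filter.eventuallyEq_of_mem hN
    intro q hq
    exact hcon q hq.1.1 hq.1.2 hq.2
  choose p hpB hpO hpU hpne using hpt
  have htend : Filter.Tendsto p Filter.atTop (nhds ((0:ℝ), s₀)) := hB.tendsto hpB
  set 𝒰 : Ultrafilter ℕ := Ultrafilter.of Filter.atTop with h𝒰
  have hle : (𝒰 : Filter ℕ) ≤ Filter.atTop := Ultrafilter.of_le _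
  set v : G → ℕ → ℝ := fun g m => ((D g).F (p m)).1 with hv
  have hU' : ∀ g : G, ∀ᶠ m in (𝒰 : Filter ℕ), p m ∈ (D g).U := fun g =>
    hle (htend.eventually_mem (((D g).isOpen_U).mem_nhds (D g).mem_U))
  have htendF : ∀ g : G,
      Filter.Tendsto (fun m => (D g).F (p m)) Filter.atTop (nhds ((0:ℝ), s₀)) := by
    intro g
    have hc : ContinuousAt (D g).F ((0:ℝ), s₀) :=
      ((D g).contF).continuousAt (((D g).isOpen_U).mem_nhds (D g).mem_U)
    have h3 := hc.tendsto.comp htend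
    rwa [(D g).fixes] at h3
  have hUF : ∀ g k : G, ∀ᶠ m in (𝒰 : Filter ℕ), (D g).F (p m) ∈ (D k).U := fun g k =>
    hle ((htendF g).eventually_mem (((D k).isOpen_U).mem_nhds (D k).mem_U))
  have hcomp' : ∀ a b : G,
      ∀ᶠ m in (𝒰 : Filter ℕ), (D (a*b)).F (p m) = (D a).F ((D b).F (p m)) :=
    fun a b => hle (htend.eventually (hcomp a b))
  refine ⟨⟨fun a b => ∀ᶠ m in (𝒰 : Filter ℕ), v a m ≤ v b m,
      fun a => Filter.Eventually.of_forall (fun m => le_refl _),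
      ?_, ?_, ?_⟩, ?_⟩
  · -- trans
    intro a b c h1 h2
    filter_upwards [h1, h2] with m hm1 hm2
    exact le_trans hm1 hm2
  · -- total
    intro a b
    rcases 𝒰.em (fun m => v a m ≤ v b m) with h1 | h1
    · exact Or.inl h1
    · refine Or.inr ?_
      filter_upwards [h1] with m hm
      exact (not_le.mp hm).le
  · -- left invariance
    intro k a b hab
    filter_upwards [hab, hU' a, hU' b, hUF a k, hUF b k, hcomp' k a, hcomp' k b] with
      m hm h1 h2 h3 h4 h5 h6
    show v (k*a) m ≤ v (k*b) m
    have he5 : v (k*a) m = ((D k).F ((D a).F (p m))).1 := by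
      show ((D (k*a)).F (p m)).1 = _
      rw [h5]
    have he6 : v (k*b) m = ((D k).F ((D b).F (p m))).1 := by
      show ((D (k*b)).F (p m)).1 = _
      rw [h6]
    have hsnd : ((D a).F (p m)).2 = ((D b).F (p m)).2 := by
      rw [(D a).snd_eq _ h1, (D b).snd_eq _ h2]
    rcases eq_or_lt_of_le hm with heq | hlt
    · have hfeq : (D a).F (p m) = (D b).F (p m) := Prod.ext heq hsnd
      rw [he5, he6, hfeq]
    · have h7 := (D k).mono _ h3 _ h4 hsnd hlt
      rw [he5, he6]
      exact h7.le
  · -- nontriviality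
    rintro ⟨h1, h2⟩
    have heq : ∀ᶠ m in (𝒰 : Filter ℕ), v g₀ m = v 1 m := by
      filter_upwards [h1, h2] with m hm1 hm2
      exact le_antisymm hm1 hm2
    obtain ⟨m, hm, hmU⟩ := (heq.and (hU' g₀)).exists
    have hone_m : (D 1).F (p m) = p m := hOsub (hpO m)
    have hv1 : v 1 m = (p m).1 := by
      show ((D 1).F (p m)).1 = (p m).1
      rw [hone_m]
    have hsnd := (D g₀).snd_eq _ hmU
    apply hpne m
    apply Prod.ext _ hsnd
    show ((D g₀).F (p m)).1 = (p m).1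
    rw [← hv1]
    exact hm

end Extract

instance : FirstCountableTopology SeqSpace := by
  unfold SeqSpace
  infer_instance

/-- For `S = {0} ∪ {1/n : n ≥ 1}` with base point `0`, a countable group `G`
admits a homomorphism with nontrivial image into `Homeo₊(ℝ)` iff it admits a
homomorphism with nontrivial image into `Homeo̰₊^{(S,0)}(ℝ, 0)`. -/
theorem nontrivial_hom_homeoPlus_iff_paramGerm_seqSpace {G : Type*} [Group G]
    [Countable G] :
    (∃ ψ : G →* HomeoPlusReal, ∃ g : G, ψ g ≠ 1) ↔
      (∃ φ : G →* ParamGermHomeoPlus SeqSpace SeqSpace.zero, ∃ g : G, φ g ≠ 1) := by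
  constructor
  · rintro ⟨ψ, g₀, hg⟩
    exact forward_exists SeqSpace SeqSpace.zero ψ g₀ hg
  · rintro ⟨φ, g₀, hg⟩
    obtain ⟨P, hP⟩ := exists_leftPreorder φ g₀ hg
    exact P.exists_hom g₀ hP
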